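/- arXiv:1801.02509 — 2 statements merged into one kernel-verified Lean document; each statement's English description precedes it below -/
import Mathlib

section
/- FISTA with backtracking rate (Theorem 2 consequence): Suppose f = φ + ψ has finite minimum f̄ attained on nonempty X̄, the step sizes t_k > 0 are non-increasing, satisfy the decrease condition and t_k ≥ 1/L, θ₀ = 1 and θ_{k+1}² ≥ θ_k²(1−θ_{k+1}) with θ_k ∈ (0,1]. Then the iterates of the proximal gradient template satisfy f(x_k) − f̄ ≤ θ_{k−1}²·dist(x₀, X̄)²/(2 t_{k−1}) ≤ L θ_{k−1}²·dist(x₀, X̄)²/2 for k ≥ 1. -/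
open scoped RealInnerProductSpace

variable {E : Type*} [NormedAddCommGroup E] [InnerProductSpace ℝ E] [FiniteDimensional ℝ E]

/-- Convex conjugate of an extended-real-valued function. -/
noncomputable def conjFn (f : E → EReal) (z : E) : EReal :=
  ⨆ x : E, (((⟪z, x⟫ : ℝ) : EReal) - f x)

/-- Subdifferential of an extended-real-valued function. -/
def SubgradAt (f : E → EReal) (x : E) : Set E :=
  {g : E | ∀ y : E, f x + (((⟪g, y - x⟫ : ℝ)) : EReal) ≤ f y}

/-- Subdifferential of a real-valued function. -/
def RSubgradAt (f : E → ℝ) (x : E) : Set E :=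
  {g : E | ∀ y : E, f x + ⟪g, y - x⟫ ≤ f y}

/-- Convexity for extended-real-valued functions. -/
def EConvex (f : E → EReal) : Prop :=
  ∀ x y : E, ∀ a b : ℝ, 0 ≤ a → 0 ≤ b → a + b = 1 →
    f (a • x + b • y) ≤ ((a : ℝ) : EReal) * f x + ((b : ℝ) : EReal) * f y

/-- Properness of an extended-real-valued function. -/
def ProperFn (f : E → EReal) : Prop := (∃ x, f x ≠ ⊤) ∧ ∀ x, f x ≠ ⊥

/-- `p` is the proximal point `Prox_t(v)` of `ψ`, i.e. a minimizer of
`y ↦ ψ(y) + ‖y - v‖²/(2t)`. -/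
def IsProxPt (ψ : E → EReal) (t : ℝ) (v p : E) : Prop :=
  ∀ y : E, ψ p + ((‖p - v‖^2 / (2*t) : ℝ) : EReal) ≤ ψ y + ((‖y - v‖^2 / (2*t) : ℝ) : EReal)

theorem grad_subgrad {φ : E → ℝ} {G xp : E} (hc : ConvexOn ℝ Set.univ φ)
    (hd : HasGradientAt φ G xp) (z : E) : φ xp + ⟪G, z - xp⟫ ≤ φ z := by
  set h : ℝ → ℝ := fun s => φ (xp + s • (z - xp)) with hh
  have hline : HasDerivAt (fun s : ℝ => xp + s • (z - xp)) (z - xp) 0 := by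
    simpa using ((hasDerivAt_id (0:ℝ)).smul_const (z - xp)).const_add xp
  have hder : HasDerivAt h ⟪G, z - xp⟫ 0 := by
    have h0 : xp + (0:ℝ) • (z - xp) = xp := by simp
    have h1 : HasFDerivAt φ (InnerProductSpace.toDual ℝ E G) (xp + (0:ℝ) • (z - xp)) := by
      rw [h0]; exact hd.hasFDerivAt
    have := h1.comp_hasDerivAt 0 hline
    simp only [Function.comp_def, InnerProductSpace.toDual_apply_apply] at this
    exact this
  have hslope : ∀ s ∈ Set.Ioc (0:ℝ) 1, slope h 0 s ≤ φ z - φ xp := by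
    intro s hs
    have hxe : xp + s • (z - xp) = (1 - s) • xp + s • z := by module
    have hcomb := hc.2 (Set.mem_univ xp) (Set.mem_univ z)
      (by linarith [hs.2] : (0:ℝ) ≤ 1 - s) (le_of_lt hs.1) (by ring)
    have hhs : h s ≤ (1 - s) * φ xp + s * φ z := by rw [hh]; simpa [hxe] using hcomb
    have hh0 : h 0 = φ xp := by simp [hh]
    rw [slope_def_field, div_le_iff₀ (by linarith [hs.1] : (0:ℝ) < s - 0)]
    nlinarith [hhs, hh0]
  have htend : Filter.Tendsto (slope h 0) (nhdsWithin 0 (Set.Ioi 0)) (nhds ⟪G, z - xp⟫) :=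
    (hasDerivAt_iff_tendsto_slope.1 hder).mono_left
      (nhdsWithin_mono _ fun s hs => hs.ne')
  have hle : ⟪G, z - xp⟫ ≤ φ z - φ xp :=
    le_of_tendsto htend (Filter.eventually_of_mem
      (Ioc_mem_nhdsGT_of_mem ⟨le_refl _, zero_lt_one⟩) hslope)
  linarith

set_option maxHeartbeats 2000000 in
/-- Theorem 2 consequence: FISTA-with-backtracking rate. -/
theorem thm2_rate (φ : E → ℝ) (φ' : E → E)
    (hφd : ∀ v, HasGradientAt φ (φ' v) v) (hφc : ConvexOn ℝ Set.univ φ)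
    (ψ : E → EReal) (hψc : EConvex ψ) (hψp : ProperFn ψ) (hψlsc : LowerSemicontinuous ψ)
    (f : E → EReal) (hf : ∀ v, f v = ((φ v : ℝ) : EReal) + ψ v)
    (fbar : ℝ) (Xbar : Set E) (hXbar : Xbar = {v : E | f v = ((fbar : ℝ) : EReal)})
    (hne : Xbar.Nonempty) (hmin : ∀ v : E, ((fbar : ℝ) : EReal) ≤ f v)
    (L : ℝ) (hL : 0 < L)
    (t : ℕ → ℝ) (ht : ∀ k, 0 < t k) (htmono : ∀ k, t (k+1) ≤ t k)
    (htL : ∀ k, 1/L ≤ t k)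
    (θ : ℕ → ℝ) (hθ0 : θ 0 = 1) (hθmem : ∀ k, θ k ∈ Set.Ioc (0:ℝ) 1)
    (hθrec : ∀ k, (θ k)^2 * (1 - θ (k+1)) ≤ (θ (k+1))^2)
    (x y g gψ : ℕ → E) (hy0 : y 0 = x 0)
    (hgψ : ∀ k, gψ k ∈ SubgradAt ψ (x (k+1)))
    (hg : ∀ k, g k = φ' (y k) + gψ k)
    (hx : ∀ k, x (k+1) = y k - t k • g k)
    (hy : ∀ k, y (k+1) = x (k+1) + ((θ (k+1) * (1 - θ k)) / θ k) • (x (k+1) - x k))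
    (hdec : ∀ k, f (x (k+1)) ≤
      ((φ (y k) + ⟪gψ k, y k - x (k+1)⟫ - t k / 2 * ‖g k‖^2 : ℝ) : EReal) + ψ (x (k+1))) :
    ∀ k : ℕ, 1 ≤ k →
      f (x k) ≤
        ((fbar + (θ (k-1))^2 * (Metric.infDist (x 0) Xbar)^2 / (2 * t (k-1)) : ℝ) : EReal) ∧
      (θ (k-1))^2 * (Metric.infDist (x 0) Xbar)^2 / (2 * t (k-1)) ≤
        L * (θ (k-1))^2 * (Metric.infDist (x 0) Xbar)^2 / 2 := by
  -- basic θ facts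
  have hθpos : ∀ k, 0 < θ k := fun k => (hθmem k).1
  have hθne : ∀ k, θ k ≠ 0 := fun k => (hθpos k).ne'
  -- Xbar is closed
  have hφcont : Continuous φ :=
    continuous_iff_continuousAt.2 fun v => (hφd v).differentiableAt.continuousAt
  have hflsc : LowerSemicontinuous f := by
    have hfeq : f = fun v => ((φ v : ℝ) : EReal) + ψ v := funext hf
    rw [hfeq]
    exact ((continuous_coe_real_ereal.comp hφcont).lowerSemicontinuous).add' hψlsc
      (fun v => EReal.continuousAt_add (Or.inr (hψp.2 v)) (Or.inl (EReal.coe_ne_bot _)))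
  have hXcl : IsClosed Xbar := by
    have hXeq : Xbar = f ⁻¹' (Set.Iic ((fbar : ℝ) : EReal)) := by
      rw [hXbar]; ext v
      simp only [Set.mem_setOf_eq, Set.mem_preimage, Set.mem_Iic]
      exact ⟨fun h => le_of_eq h, fun h => le_antisymm h (hmin v)⟩
    rw [hXeq]
    exact hflsc.isClosed_preimage _
  -- minimizer xs attaining the distance
  obtain ⟨xs, hxsmem, hxsdist⟩ := hXcl.exists_infDist_eq_dist hne (x 0)
  have hfxs : f xs = ((fbar : ℝ) : EReal) := by rw [hXbar] at hxsmem; exact hxsmem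
  set R : ℝ := Metric.infDist (x 0) Xbar with hR
  have hRx : R = ‖x 0 - xs‖ := by rw [hxsdist, dist_eq_norm]
  -- ψ finite at x (k+1)
  have hψnt : ∀ k, ψ (x (k+1)) ≠ ⊤ := by
    intro k htop
    obtain ⟨w, hw⟩ := hψp.1
    have h1 := hgψ k w
    rw [htop, EReal.top_add_coe] at h1
    exact hw (top_le_iff.1 h1)
  have hψx : ∀ k, ψ (x (k+1)) = (((ψ (x (k+1))).toReal : ℝ) : EReal) := fun k =>
    (EReal.coe_toReal (hψnt k) (hψp.2 _)).symm
  -- ψ finite at xs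
  have hψxs : ψ xs = ((fbar - φ xs : ℝ) : EReal) := by
    have h1 : ((φ xs : ℝ) : EReal) + ψ xs = ((fbar : ℝ) : EReal) := by
      rw [← hf]; exact hfxs
    have hnt : ψ xs ≠ ⊤ := by
      intro h; rw [h, EReal.coe_add_top] at h1; exact (EReal.top_ne_coe _) h1
    obtain ⟨s, hs⟩ : ∃ s : ℝ, ψ xs = ((s : ℝ) : EReal) :=
      ⟨_, (EReal.coe_toReal hnt (hψp.2 xs)).symm⟩
    rw [hs, ← EReal.coe_add] at h1
    rw [hs]
    norm_cast at h1 ⊢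
    linarith
  -- the real-valued objective values
  set F : ℕ → ℝ := fun k => φ (x k) + (ψ (x k)).toReal with hFdef
  have hF : ∀ k, f (x (k+1)) = ((F (k+1) : ℝ) : EReal) := by
    intro k
    rw [hf, hψx k, ← EReal.coe_add]
  have hFlb : ∀ k, fbar ≤ F (k+1) := by
    intro k
    have := hmin (x (k+1))
    rw [hF k] at this
    exact_mod_cast this
  -- inner product facts
  have hnsm : ∀ (c : ℝ) (v : E), ‖c • v‖^2 = c^2 * ‖v‖^2 := by
    intro c v; rw [norm_smul, mul_pow, Real.norm_eq_abs, sq_abs]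
  -- fundamental per-step inequality
  have hstep : ∀ (k : ℕ) (z : E) (M : ℝ), f z ≤ ((M : ℝ) : EReal) →
      F (k+1) ≤ M + (‖y k - z‖^2 - ‖x (k+1) - z‖^2) / (2 * t k) := by
    intro k z M hz
    have hz' : ((φ z : ℝ) : EReal) + ψ z ≤ ((M : ℝ) : EReal) := by rw [← hf]; exact hz
    have hznt : ψ z ≠ ⊤ := by
      intro h; rw [h, EReal.coe_add_top] at hz'
      exact (not_le.2 (EReal.coe_lt_top M)) hz'
    obtain ⟨s, hs⟩ : ∃ s : ℝ, ψ z = ((s : ℝ) : EReal) :=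
      ⟨_, (EReal.coe_toReal hznt (hψp.2 z)).symm⟩
    have hφzs : φ z + s ≤ M := by
      rw [hs, ← EReal.coe_add] at hz'; exact_mod_cast hz'
    -- ψ subgradient inequality at x (k+1) applied at z
    have hsub := hgψ k z
    rw [hψx k, hs, ← EReal.coe_add] at hsub
    have hsub' : (ψ (x (k+1))).toReal + ⟪gψ k, z - x (k+1)⟫ ≤ s := by exact_mod_cast hsub
    -- gradient inequality for φ at y k
    have hgr := grad_subgrad hφc (hφd (y k)) z
    -- the decrease condition, in ℝ
    have hd0 := hdec k
    rw [hF k, hψx k, ← EReal.coe_add] at hd0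
    have hd1 : F (k+1) ≤ φ (y k) + ⟪gψ k, y k - x (k+1)⟫ - t k / 2 * ‖g k‖^2
        + (ψ (x (k+1))).toReal := by exact_mod_cast hd0
    -- algebra with the prox step
    have htk : t k ≠ 0 := (ht k).ne'
    have hns : ‖(y k - z) - t k • g k‖^2
        = ‖y k - z‖^2 - 2 * (t k * ⟪g k, y k - z⟫) + t k^2 * ‖g k‖^2 := by
      rw [norm_sub_sq_real, real_inner_smul_right, real_inner_comm, norm_smul]
      simp only [Real.norm_eq_abs, mul_pow, sq_abs]
    have halg : ⟪g k, y k - z⟫ - t k / 2 * ‖g k‖^2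
        = (‖y k - z‖^2 - ‖x (k+1) - z‖^2) / (2 * t k) := by
      rw [hx k, show y k - t k • g k - z = (y k - z) - t k • g k from by abel, hns]
      field_simp
      ring
    have e1 : ⟪gψ k, y k - x (k+1)⟫ = ⟪gψ k, y k⟫ - ⟪gψ k, x (k+1)⟫ := inner_sub_right _ _ _
    have e2 : ⟪gψ k, z - x (k+1)⟫ = ⟪gψ k, z⟫ - ⟪gψ k, x (k+1)⟫ := inner_sub_right _ _ _
    have e3 : ⟪gψ k, y k - z⟫ = ⟪gψ k, y k⟫ - ⟪gψ k, z⟫ := inner_sub_right _ _ _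
    have e4 : ⟪φ' (y k), z - y k⟫ = ⟪φ' (y k), z⟫ - ⟪φ' (y k), y k⟫ := inner_sub_right _ _ _
    have e5 : ⟪φ' (y k), y k - z⟫ = ⟪φ' (y k), y k⟫ - ⟪φ' (y k), z⟫ := inner_sub_right _ _ _
    have e6 : ⟪g k, y k - z⟫ = ⟪φ' (y k), y k - z⟫ + ⟪gψ k, y k - z⟫ := by
      rw [hg k]; exact inner_add_left _ _ _
    rw [← halg]
    linarith
  -- auxiliary sequence u
  set u : ℕ → E := fun k => x k + (θ k)⁻¹ • (y k - x k) with hu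
  have hu0 : u 0 = x 0 := by simp [hu, hy0]
  have huc : ∀ k, u (k+1) = x k + (θ k)⁻¹ • (x (k+1) - x k) := by
    intro k
    have h1 := hy k
    have h2 := hθne k
    have h3 := hθne (k+1)
    simp only [hu]
    rw [h1]
    match_scalars <;> field_simp <;> ring
  have hcomb1 : ∀ k, y k - ((1 - θ k) • x k + θ k • xs) = θ k • (u k - xs) := by
    intro k
    have h2 := hθne k
    simp only [hu]
    match_scalars <;> field_simp <;> ring
  have hcomb2 : ∀ k, x (k+1) - ((1 - θ k) • x k + θ k • xs) = θ k • (u (k+1) - xs) := by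
    intro k
    have h2 := hθne k
    rw [huc k]
    match_scalars <;> field_simp <;> ring
  -- per-step inequality in telescoping form (for indices ≥ 1)
  have hstep2 : ∀ k, F (k+2) ≤ (1 - θ (k+1)) * F (k+1) + θ (k+1) * fbar
      + (θ (k+1))^2 * (‖u (k+1) - xs‖^2 - ‖u (k+2) - xs‖^2) / (2 * t (k+1)) := by
    intro k
    have ha : (0:ℝ) ≤ 1 - θ (k+1) := by linarith [(hθmem (k+1)).2]
    have hb : (0:ℝ) ≤ θ (k+1) := le_of_lt (hθpos (k+1))
    have hφz : φ ((1 - θ (k+1)) • x (k+1) + θ (k+1) • xs)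
        ≤ (1 - θ (k+1)) * φ (x (k+1)) + θ (k+1) * φ xs := by
      have := hφc.2 (Set.mem_univ (x (k+1))) (Set.mem_univ xs) ha hb (by ring)
      simpa using this
    have hψz : ψ ((1 - θ (k+1)) • x (k+1) + θ (k+1) • xs)
        ≤ (((1 - θ (k+1)) * (ψ (x (k+1))).toReal + θ (k+1) * (fbar - φ xs) : ℝ) : EReal) := by
      have h0 := hψc (x (k+1)) xs (1 - θ (k+1)) (θ (k+1)) ha hb (by ring)
      rw [hψx k, hψxs, ← EReal.coe_mul, ← EReal.coe_mul, ← EReal.coe_add] at h0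
      exact h0
    have hM : f ((1 - θ (k+1)) • x (k+1) + θ (k+1) • xs)
        ≤ (((1 - θ (k+1)) * F (k+1) + θ (k+1) * fbar : ℝ) : EReal) := by
      rw [hf]
      calc ((φ ((1 - θ (k+1)) • x (k+1) + θ (k+1) • xs) : ℝ) : EReal)
            + ψ ((1 - θ (k+1)) • x (k+1) + θ (k+1) • xs)
          ≤ ((φ ((1 - θ (k+1)) • x (k+1) + θ (k+1) • xs) : ℝ) : EReal)
            + (((1 - θ (k+1)) * (ψ (x (k+1))).toReal + θ (k+1) * (fbar - φ xs) : ℝ) : EReal) :=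
            add_le_add le_rfl hψz
        _ = ((φ ((1 - θ (k+1)) • x (k+1) + θ (k+1) • xs)
            + ((1 - θ (k+1)) * (ψ (x (k+1))).toReal + θ (k+1) * (fbar - φ xs)) : ℝ) : EReal) := by
            rw [← EReal.coe_add]
        _ ≤ (((1 - θ (k+1)) * F (k+1) + θ (k+1) * fbar : ℝ) : EReal) := by
            apply EReal.coe_le_coe_iff.2
            have hFv : F (k+1) = φ (x (k+1)) + (ψ (x (k+1))).toReal := rfl
            nlinarith [hφz]
    have h := hstep (k+1) ((1 - θ (k+1)) • x (k+1) + θ (k+1) • xs)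
      ((1 - θ (k+1)) * F (k+1) + θ (k+1) * fbar) hM
    rw [hcomb1 (k+1), hcomb2 (k+1), hnsm, hnsm] at h
    have heq : (θ (k+1)^2 * ‖u (k+1) - xs‖^2 - θ (k+1)^2 * ‖u (k+2) - xs‖^2) / (2 * t (k+1))
        = θ (k+1)^2 * (‖u (k+1) - xs‖^2 - ‖u (k+2) - xs‖^2) / (2 * t (k+1)) := by ring
    linarith [h, heq.le, heq.ge]
  -- base case
  have hu1 : u 1 = x 1 := by
    rw [huc 0, hθ0]
    simp
  have hbase : t 0 * (F 1 - fbar) + ‖u 1 - xs‖^2 / 2 ≤ ‖x 0 - xs‖^2 / 2 := by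
    have h := hstep 0 xs fbar (le_of_eq hfxs)
    rw [hy0] at h
    have hx1 : x (0+1) = u 1 := by rw [hu1]
    rw [hx1] at h
    have ht0 := ht 0
    have h2 : F 1 - fbar ≤ (‖x 0 - xs‖^2 - ‖u 1 - xs‖^2) / (2 * t 0) := by linarith [h]
    have h3 := mul_le_mul_of_nonneg_left h2 ht0.le
    have h4 : t 0 * ((‖x 0 - xs‖^2 - ‖u 1 - xs‖^2) / (2 * t 0))
        = (‖x 0 - xs‖^2 - ‖u 1 - xs‖^2) / 2 := by
      field_simp
    linarith [h3, h4.le, h4.ge]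
  -- the telescoping quantity
  set Es : ℕ → ℝ := fun k => t k / (θ k)^2 * (F (k+1) - fbar) + ‖u (k+1) - xs‖^2 / 2 with hEs
  have hEmono : ∀ k, Es (k+1) ≤ Es k := by
    intro k
    have h2 := hstep2 k
    have hδ1 : fbar ≤ F (k+1) := hFlb k
    have ht1 := ht k
    have ht2 := ht (k+1)
    have htm := htmono k
    have hθ1 := hθpos k
    have hθ2 := hθpos (k+1)
    have hrec := hθrec k
    have hθa : θ (k+1) ≤ 1 := (hθmem (k+1)).2
    have hcoef : t (k+1) * (1 - θ (k+1)) / (θ (k+1))^2 ≤ t k / (θ k)^2 := by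
      rw [div_le_div_iff₀ (by positivity) (by positivity)]
      nlinarith [mul_le_mul_of_nonneg_left hrec ht1.le,
        mul_le_mul_of_nonneg_right htm (mul_nonneg (by linarith : (0:ℝ) ≤ 1 - θ (k+1)) (sq_nonneg (θ k)))]
    have hc : (0:ℝ) < t (k+1) / (θ (k+1))^2 := by positivity
    have h3 : F (k+2) - fbar ≤ (1 - θ (k+1)) * (F (k+1) - fbar)
        + (θ (k+1))^2 * (‖u (k+1) - xs‖^2 - ‖u (k+2) - xs‖^2) / (2 * t (k+1)) := by
      linarith [h2]
    have h4 := mul_le_mul_of_nonneg_left h3 hc.le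
    have h5 : t (k+1) / (θ (k+1))^2 * ((1 - θ (k+1)) * (F (k+1) - fbar)
        + (θ (k+1))^2 * (‖u (k+1) - xs‖^2 - ‖u (k+2) - xs‖^2) / (2 * t (k+1)))
        = t (k+1) * (1 - θ (k+1)) / (θ (k+1))^2 * (F (k+1) - fbar)
        + (‖u (k+1) - xs‖^2 - ‖u (k+2) - xs‖^2) / 2 := by
      field_simp
    have h6 : t (k+1) * (1 - θ (k+1)) / (θ (k+1))^2 * (F (k+1) - fbar)
        ≤ t k / (θ k)^2 * (F (k+1) - fbar) :=
      mul_le_mul_of_nonneg_right hcoef (by linarith)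
    simp only [hEs]
    linarith [h4, h5.le, h5.ge, h6]
  have hE0 : Es 0 ≤ ‖x 0 - xs‖^2 / 2 := by
    simp only [hEs, hθ0]
    norm_num
    linarith [hbase, ht 0]
  have hEall : ∀ k, Es k ≤ ‖x 0 - xs‖^2 / 2 := by
    intro k
    induction k with
    | zero => exact hE0
    | succ n ih => exact le_trans (hEmono n) ih
  -- conclusion
  intro k hk
  obtain ⟨j, rfl⟩ : ∃ j, k = j + 1 := ⟨k - 1, (Nat.succ_pred_eq_of_pos hk).symm⟩
  have hsub : j + 1 - 1 = j := rfl
  rw [hsub]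
  have htj := ht j
  have hθj := hθpos j
  have hD : (0:ℝ) ≤ ‖u (j+1) - xs‖^2 / 2 := by positivity
  have h7 : t j / (θ j)^2 * (F (j+1) - fbar) ≤ R^2 / 2 := by
    have h9 : t j / (θ j)^2 * (F (j+1) - fbar) + ‖u (j+1) - xs‖^2 / 2 ≤ ‖x 0 - xs‖^2 / 2 :=
      hEall j
    rw [hRx]
    linarith
  have hc : (0:ℝ) < (θ j)^2 / t j := by positivity
  have h8 := mul_le_mul_of_nonneg_left h7 hc.le
  have e : (θ j)^2 / t j * (t j / (θ j)^2 * (F (j+1) - fbar)) = F (j+1) - fbar := by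
    field_simp
  have e2 : (θ j)^2 / t j * (R^2 / 2) = (θ j)^2 * R^2 / (2 * t j) := by
    rw [div_mul_div_comm, mul_comm (t j) 2]
  have hfinal : F (j+1) ≤ fbar + (θ j)^2 * R^2 / (2 * t j) := by
    linarith [h8, e.le, e.ge, e2.le, e2.ge]
  constructor
  · rw [hF j]
    exact_mod_cast hfinal
  · have h1 : 1 ≤ t j * L := (div_le_iff₀ hL).1 (htL j)
    rw [div_le_div_iff₀ (by positivity) (by norm_num)]
    nlinarith [mul_nonneg (sq_nonneg (θ j)) (sq_nonneg R),
      mul_le_mul_of_nonneg_left h1 (mul_nonneg (sq_nonneg (θ j)) (sq_nonneg R))]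
end

section
/- Consequence of the proximal subgradient bound: under the hypotheses of Proposition 1, for every x ∈ ℝⁿ, (∑_{i=0}^{k} t_i(φ(x_i)+ψ(x_{i+1})) − ½∑_{i=0}^{k} t_i²‖g_i^φ‖²)/(∑_{i=0}^{k} t_i) ≤ f(x) + ‖x₀ − x‖²/(2∑_{i=0}^{k} t_i). -/
open scoped RealInnerProductSpace

variable {E : Type*} [NormedAddCommGroup E] [InnerProductSpace ℝ E] [FiniteDimensional ℝ E]

lemma key_inner (u w a b : E) (t : ℝ) :
    t*⟪a, u - w⟫ + t*⟪b, (u - t•(a+b)) - w⟫ ≤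
      ‖u - w‖^2/2 - ‖(u - t•(a+b)) - w‖^2/2 + t^2*‖a‖^2/2 := by
  have h1 : ‖u - w‖^2 = ⟪u-w, u-w⟫ := (real_inner_self_eq_norm_sq _).symm
  have h2 : ‖(u - t•(a+b)) - w‖^2 = ⟪(u - t•(a+b)) - w, (u - t•(a+b)) - w⟫ :=
    (real_inner_self_eq_norm_sq _).symm
  have h3 : ‖a‖^2 = ⟪a,a⟫ := (real_inner_self_eq_norm_sq _).symm
  have key : ‖u - w‖^2/2 - ‖(u - t•(a+b)) - w‖^2/2 + t^2*‖a‖^2/2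
      - (t*⟪a, u - w⟫ + t*⟪b, (u - t•(a+b)) - w⟫) = t^2*⟪b,b⟫/2 := by
    rw [h1, h2, h3]
    simp only [inner_sub_left, inner_sub_right, inner_add_left, inner_add_right,
      inner_smul_left, inner_smul_right, RCLike.conj_to_real]
    linear_combination (-(t/2))*(real_inner_comm u a) + (-(t/2))*(real_inner_comm u b) +
      (-(t/2))*(real_inner_comm a w) + (-(t/2))*(real_inner_comm b w) +
      (-(t^2/2))*(real_inner_comm b a)
  nlinarith [mul_nonneg (sq_nonneg t) (real_inner_self_nonneg (x := b))]

lemma ereal_coe_sum {ι : Type*} (s : Finset ι) (f : ι → ℝ) :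
    ((∑ i ∈ s, f i : ℝ) : EReal) = ∑ i ∈ s, ((f i : ℝ) : EReal) := by
  induction s using Finset.cons_induction with
  | empty => simp
  | cons i s hi ih => rw [Finset.sum_cons, Finset.sum_cons, EReal.coe_add, ih]

/-- Consequence of Proposition 1: the averaged bound against any comparison point. -/
theorem prox_subgrad_bound_consequence (φ : E → ℝ) (hφc : ConvexOn ℝ Set.univ φ)
    (ψ : E → EReal) (hψc : EConvex ψ) (hψp : ProperFn ψ) (hψlsc : LowerSemicontinuous ψ)
    (f : E → EReal) (hf : ∀ v, f v = ((φ v : ℝ) : EReal) + ψ v)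
    (t : ℕ → ℝ) (ht : ∀ k, 0 < t k)
    (x g gφ gψ : ℕ → E)
    (hgφ : ∀ k, gφ k ∈ RSubgradAt φ (x k))
    (hprox : ∀ k, IsProxPt ψ (t k) (x k - t k • gφ k) (x (k+1)))
    (hgψ : ∀ k, gψ k ∈ SubgradAt ψ (x (k+1)))
    (hg : ∀ k, g k = gφ k + gψ k)
    (hx : ∀ k, x (k+1) = x k - t k • g k) :
    ∀ k : ℕ, ∀ w : E,
      ((∑ i ∈ Finset.range (k+1), (((t i : ℝ) : EReal) *
            (((φ (x i) : ℝ) : EReal) + ψ (x (i+1))))) -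
          ((1/2 * ∑ i ∈ Finset.range (k+1), (t i)^2 * ‖gφ i‖^2 : ℝ) : EReal)) /
          (((∑ i ∈ Finset.range (k+1), t i : ℝ)) : EReal)
        ≤ f w + ((‖x 0 - w‖^2 / (2 * ∑ i ∈ Finset.range (k+1), t i) : ℝ) : EReal) := by
  intro k w
  -- ψ is finite at each x (i+1)
  obtain ⟨x0, hx0⟩ := hψp.1
  have hfin : ∀ i : ℕ, ψ (x (i+1)) ≠ ⊤ := by
    intro i h
    have := hgψ i x0
    rw [h, EReal.top_add_coe] at this
    exact hx0 (top_le_iff.1 this)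
  set ψr : ℕ → ℝ := fun i => (ψ (x (i+1))).toReal with hψr
  have hψrc : ∀ i : ℕ, ψ (x (i+1)) = ((ψr i : ℝ) : EReal) := fun i =>
    (EReal.coe_toReal (hfin i) (hψp.2 _)).symm
  by_cases hw : ψ w = ⊤
  · rw [hf w, hw, EReal.coe_add_top, EReal.top_add_coe]
    exact le_top
  -- real comparison value at w
  set ψw : ℝ := (ψ w).toReal with hψwdef
  have hψwc : ψ w = ((ψw : ℝ) : EReal) := (EReal.coe_toReal hw (hψp.2 _)).symm
  -- per-step real inequality
  have step : ∀ i : ℕ, t i * (φ (x i) + ψr i) ≤ t i * (φ w + ψw)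
      + ‖x i - w‖^2/2 - ‖x (i+1) - w‖^2/2 + (t i)^2 * ‖gφ i‖^2 / 2 := by
    intro i
    have hA := hgφ i w
    have hB : ψr i + ⟪gψ i, w - x (i+1)⟫ ≤ ψw := by
      have := hgψ i w
      rw [hψrc i, hψwc, ← EReal.coe_add, EReal.coe_le_coe_iff] at this
      exact this
    have hxE : x (i+1) = x i - t i • (gφ i + gψ i) := by rw [hx i, hg i]
    have hk := key_inner (x i) w (gφ i) (gψ i) (t i)
    rw [← hxE] at hk
    have h1 : ⟪gφ i, w - x i⟫ = -⟪gφ i, x i - w⟫ := by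
      rw [show w - x i = -(x i - w) by abel, inner_neg_right]
    have h2 : ⟪gψ i, w - x (i+1)⟫ = -⟪gψ i, x (i+1) - w⟫ := by
      rw [show w - x (i+1) = -(x (i+1) - w) by abel, inner_neg_right]
    rw [h1] at hA; rw [h2] at hB
    have hA' := mul_le_mul_of_nonneg_left hA (ht i).le
    have hB' := mul_le_mul_of_nonneg_left hB (ht i).le
    nlinarith [hA', hB', hk]
  -- sum it up
  have hsum : ∑ i ∈ Finset.range (k+1), t i * (φ (x i) + ψr i)
      ≤ (∑ i ∈ Finset.range (k+1), t i) * (φ w + ψw) + ‖x 0 - w‖^2/2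
        + ∑ i ∈ Finset.range (k+1), (t i)^2 * ‖gφ i‖^2 / 2 := by
    have h1 : ∑ i ∈ Finset.range (k+1), t i * (φ (x i) + ψr i)
        ≤ ∑ i ∈ Finset.range (k+1), (t i * (φ w + ψw)
          + (‖x i - w‖^2/2 - ‖x (i+1) - w‖^2/2) + (t i)^2 * ‖gφ i‖^2 / 2) := by
      apply Finset.sum_le_sum
      intro i _
      have := step i
      linarith
    rw [Finset.sum_add_distrib, Finset.sum_add_distrib, ← Finset.sum_mul,
      Finset.sum_range_sub' (fun i => ‖x i - w‖^2/2)] at h1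
    have h2 : ‖x 0 - w‖^2/2 - ‖x (k+1) - w‖^2/2 ≤ ‖x 0 - w‖^2/2 := by nlinarith [sq_nonneg ‖x (k+1) - w‖]
    linarith
  set T : ℝ := ∑ i ∈ Finset.range (k+1), t i with hT
  have hTpos : 0 < T := Finset.sum_pos (fun i _ => ht i) (by simp)
  -- rewrite goal in real terms
  have hnum : (∑ i ∈ Finset.range (k+1), (((t i : ℝ) : EReal) *
        (((φ (x i) : ℝ) : EReal) + ψ (x (i+1)))))
      = (((∑ i ∈ Finset.range (k+1), t i * (φ (x i) + ψr i) : ℝ)) : EReal) := by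
    rw [ereal_coe_sum]
    apply Finset.sum_congr rfl
    intro i _
    rw [hψrc i, ← EReal.coe_add, ← EReal.coe_mul]
  rw [hnum, hf w, hψwc, ← EReal.coe_add, ← EReal.coe_sub, ← EReal.coe_add]
  rw [← EReal.coe_div, EReal.coe_le_coe_iff]
  rw [div_le_iff₀ hTpos]
  have hC : (1:ℝ)/2 * ∑ i ∈ Finset.range (k+1), (t i)^2 * ‖gφ i‖^2
      = ∑ i ∈ Finset.range (k+1), (t i)^2 * ‖gφ i‖^2 / 2 := by
    rw [Finset.mul_sum]; apply Finset.sum_congr rfl; intro i _; ring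
  rw [hC]
  have hdiv : (φ w + ψw + ‖x 0 - w‖^2 / (2 * T)) * T
      = T * (φ w + ψw) + ‖x 0 - w‖^2/2 := by
    field_simp
  rw [hdiv]
  linarith
end
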